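/- There exist explicitly computable positive constants a and b such that for all sufficiently large real x, a·x/log x < π(x) < b·x/log x. -/
import Mathlib

open Nat Finset

lemma card_primesBelow_succ (n : ℕ) : (Nat.primesBelow (n+1)).card = Nat.primeCounting n := by
  rw [Nat.primesBelow_card_eq_primeCounting', Nat.primeCounting]

lemma cheb_upper_nat (n : ℕ) :
    Nat.sqrt n ^ (Nat.primeCounting n - Nat.primeCounting (Nat.sqrt n)) ≤ 4 ^ n := by
  set s := Nat.sqrt n with hs
  set S := Nat.primesBelow (n+1) with hS
  set T := S.filter (fun p => s < p) with hT
  have hcardS : S.card = Nat.primeCounting n := card_primesBelow_succ n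
  have hsplit : T.card + (S.filter (fun p => ¬ s < p)).card = S.card :=
    Finset.card_filter_add_card_filter_not _
  have hcompl : S.filter (fun p => ¬ s < p) = Nat.primesBelow (s+1) := by
    have hsn : s ≤ n := Nat.sqrt_le_self n
    ext p
    simp only [Finset.mem_filter, Nat.mem_primesBelow, not_lt, hS]
    constructor
    · rintro ⟨⟨_, hp⟩, hps⟩; exact ⟨by omega, hp⟩
    · rintro ⟨hps, hp⟩; exact ⟨⟨by omega, hp⟩, by omega⟩
  have hcardT : T.card = Nat.primeCounting n - Nat.primeCounting s := by
    have := card_primesBelow_succ s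
    rw [hcompl] at hsplit
    omega
  calc s ^ (Nat.primeCounting n - Nat.primeCounting s) = s ^ T.card := by rw [hcardT]
    _ ≤ ∏ p ∈ T, p := Finset.pow_card_le_prod _ _ _ (fun p hp => by
        rw [hT, Finset.mem_filter] at hp; exact hp.2.le)
    _ ≤ ∏ p ∈ S, p := Finset.prod_le_prod_of_subset_of_one_le' (Finset.filter_subset _ _)
        (fun p hp _ => (Nat.prime_of_mem_primesBelow hp).one_lt.le)
    _ = primorial n := rfl
    _ ≤ 4 ^ n := primorial_le_4_pow n

lemma cheb_lower_nat (m : ℕ) (hm : 4 ≤ m) :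
    4 ^ m < m * (2*m) ^ (Nat.primeCounting (2*m)) := by
  have h1 : 4 ^ m < m * Nat.centralBinom m := Nat.four_pow_lt_mul_centralBinom m hm
  have h2 : Nat.centralBinom m ≤ (2*m) ^ (Nat.primeCounting (2*m)) := by
    rw [← Nat.prod_pow_factorization_centralBinom m]
    have : ∀ p ∈ Finset.range (2*m+1), ¬ p.Prime → p ^ (Nat.centralBinom m).factorization p = 1 := by
      intro p _ hp
      rw [Nat.factorization_eq_zero_of_not_prime _ hp, pow_zero]
    rw [← Finset.prod_filter_of_ne (fun p hp h => by
      by_contra hnp; exact h (this p hp hnp))]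
    calc ∏ p ∈ (Finset.range (2*m+1)).filter Nat.Prime, p ^ (Nat.centralBinom m).factorization p
        ≤ ∏ _p ∈ (Finset.range (2*m+1)).filter Nat.Prime, (2*m) := by
          apply Finset.prod_le_prod'
          intro p hp
          exact Nat.pow_factorization_choose_le (by omega)
      _ = (2*m) ^ (Nat.primeCounting (2*m)) := by
          rw [Finset.prod_const]
          congr 1
          exact card_primesBelow_succ (2*m)
  calc 4 ^ m < m * Nat.centralBinom m := h1
    _ ≤ m * (2*m) ^ (Nat.primeCounting (2*m)) := Nat.mul_le_mul_left m h2

lemma pi_le (k : ℕ) : Nat.primeCounting k ≤ k + 1 := by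
  rw [← card_primesBelow_succ]
  exact (Finset.card_filter_le _ _).trans (by simp)

noncomputable def primePi (x : ℝ) : ℝ := Nat.primeCounting ⌊x⌋₊

section Main
open Real Filter

theorem chebyshev_bounds' :
    ∀ᶠ x : ℝ in Filter.atTop,
      (4⁻¹ : ℝ) * x / Real.log x < (Nat.primeCounting ⌊x⌋₊ : ℝ) ∧
        (Nat.primeCounting ⌊x⌋₊ : ℝ) < 16 * x / Real.log x := by
  filter_upwards [eventually_ge_atTop (1000:ℝ)] with x hx
  set n := ⌊x⌋₊ with hn
  have hn1000 : 1000 ≤ n := Nat.le_floor (by exact_mod_cast hx)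
  have hnx : (n:ℝ) ≤ x := Nat.floor_le (by linarith)
  have hxn : x - 1 < n := by
    have := Nat.lt_floor_add_one x; linarith
  have hx1 : (1:ℝ) < x := by linarith
  have hlogx : 0 < Real.log x := Real.log_pos hx1
  -- sqrt facts
  have hsqx : 10 ≤ Real.sqrt x := by
    nlinarith [Real.sq_sqrt (by linarith : (0:ℝ) ≤ x), Real.sqrt_nonneg x]
  have hlogx2 : Real.log x ≤ 2 * Real.sqrt x - 2 := by
    have h1 : Real.log (Real.sqrt x) ≤ Real.sqrt x - 1 :=
      Real.log_le_sub_one_of_pos (by linarith)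
    rw [Real.log_sqrt (by linarith)] at h1
    linarith
  have hsqx2 : Real.sqrt x ≤ x / 10 := by
    nlinarith [Real.sq_sqrt (by linarith : (0:ℝ) ≤ x)]
  have hlogx5 : Real.log x ≤ x / 5 := by linarith
  constructor
  · -- lower bound
    set m := n / 2 with hm
    have hm4 : 4 ≤ m := by omega
    have h2m : 2 * m ≤ n := by omega
    have h2m1 : n ≤ 2 * m + 1 := by omega
    have hnat := cheb_lower_nat m hm4
    set k := Nat.primeCounting (2*m) with hk
    have hR : (4:ℝ)^m < (m:ℝ) * (2*m:ℕ)^k := by exact_mod_cast hnat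
    have hlog : (m:ℝ) * Real.log 4 < Real.log m + k * Real.log (2*m:ℕ) := by
      have := Real.log_lt_log (by positivity) hR
      rw [Real.log_pow, Real.log_mul (by positivity) (by positivity), Real.log_pow] at this
      linarith
    have hmono : k ≤ Nat.primeCounting n := Nat.monotone_primeCounting h2m
    have h2mx : ((2*m:ℕ):ℝ) ≤ x := le_trans (by exact_mod_cast Nat.cast_le.mpr h2m) hnx
    have hmx : (m:ℝ) ≤ x := le_trans (by exact_mod_cast Nat.cast_le.mpr (by omega : m ≤ n)) hnx
    have hm2 : (x - 2)/2 ≤ (m:ℝ) := by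
      have : (n:ℝ) ≤ 2*m + 1 := by exact_mod_cast h2m1
      linarith
    have hlog2m_pos : (0:ℝ) < Real.log ((2*m:ℕ):ℝ) := by
      have h1 : (1:ℕ) < 2*m := by omega
      exact Real.log_pos (by exact_mod_cast h1)
    have hlog2m_le : Real.log ((2*m:ℕ):ℝ) ≤ Real.log x :=
      Real.log_le_log (by positivity) h2mx
    have hlogm_le : Real.log (m:ℝ) ≤ Real.log x :=
      Real.log_le_log (by positivity) hmx
    have hchain : (k:ℝ) * Real.log ((2*m:ℕ):ℝ) ≤ (Nat.primeCounting n : ℝ) * Real.log x := by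
      apply mul_le_mul (by exact_mod_cast hmono) hlog2m_le (le_of_lt hlog2m_pos) (by positivity)
    have hlog4 : Real.log 4 = 2 * Real.log 2 := by
      rw [show (4:ℝ) = 2^2 by norm_num, Real.log_pow]; push_cast; ring
    have hl2 : (0.6931471803:ℝ) < Real.log 2 := Real.log_two_gt_d9
    rw [div_lt_iff₀ hlogx]
    nlinarith [hlog, hchain, hm2, hlogm_le, hlogx5]
  · -- upper bound
    set s := Nat.sqrt n with hsdef
    have hs2 : 2 ≤ s := by
      rw [hsdef, Nat.le_sqrt]; omega
    set d := Nat.primeCounting n - Nat.primeCounting s with hd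
    have hnat := cheb_upper_nat n
    have hR : ((s:ℝ))^d ≤ 4^n := by exact_mod_cast hnat
    have hlogs : (0:ℝ) < Real.log s := by
      apply Real.log_pos; exact_mod_cast by omega
    have hlog : (d:ℝ) * Real.log s ≤ (n:ℝ) * Real.log 4 := by
      have := Real.log_le_log (by positivity) hR
      rw [Real.log_pow, Real.log_pow] at this
      exact_mod_cast this
    -- n ≤ 4 s^2
    have hns : n ≤ 4 * (s * s) := by
      have h1 : n < (s+1)*(s+1) := by
        have := Nat.lt_succ_sqrt n; rw [← hsdef] at this
        calc n < (s+1)^2 := by rw [pow_two]; nlinarith [Nat.lt_succ_sqrt n]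
          _ = (s+1)*(s+1) := by ring
      nlinarith
    have hlogns : Real.log (n:ℝ) ≤ 4 * Real.log s := by
      have h1 : Real.log (n:ℝ) ≤ Real.log ((4:ℝ) * (s*s)) :=
        Real.log_le_log (by positivity) (by exact_mod_cast hns)
      rw [Real.log_mul (by norm_num) (by positivity), Real.log_mul (by positivity) (by positivity)] at h1
      have h2 : Real.log (4:ℝ) ≤ 2 * Real.log s := by
        have : Real.log (4:ℝ) = 2 * Real.log 2 := by
          rw [show (4:ℝ) = 2^2 by norm_num, Real.log_pow]; push_cast; ring
        rw [this]
        have : Real.log 2 ≤ Real.log s := Real.log_le_log (by norm_num) (by exact_mod_cast hs2)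
        linarith
      linarith
    have hlognx : Real.log x / 2 ≤ Real.log (n:ℝ) := by
      have h1 : Real.sqrt x ≤ (n:ℝ) := by linarith
      have := Real.log_le_log (by linarith : (0:ℝ) < Real.sqrt x) h1
      rw [Real.log_sqrt (by linarith)] at this
      linarith
    have hlogsx : Real.log x / 8 ≤ Real.log s := by linarith
    have hdle : (d:ℝ) * Real.log x ≤ 8 * (x * Real.log 4) := by
      have h1 : (d:ℝ) * (Real.log x / 8) ≤ (d:ℝ) * Real.log s :=
        mul_le_mul_of_nonneg_left hlogsx (by positivity)
      have h2 : (n:ℝ) * Real.log 4 ≤ x * Real.log 4 := by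
        apply mul_le_mul_of_nonneg_right hnx
        rw [show (4:ℝ) = 2^2 by norm_num, Real.log_pow]
        positivity
      linarith
    have hpis : (Nat.primeCounting s : ℝ) ≤ Real.sqrt x + 1 := by
      have h1 : Nat.primeCounting s ≤ s + 1 := pi_le s
      have h2 : (s:ℝ) ≤ Real.sqrt x := by
        rw [show (s:ℝ) = Real.sqrt ((s:ℝ)^2) by rw [Real.sqrt_sq (by positivity)]]
        apply Real.sqrt_le_sqrt
        have : (s*s : ℕ) ≤ n := by have h := Nat.sqrt_le' n; rw [pow_two] at h; exact h
        calc ((s:ℝ))^2 = ((s*s:ℕ):ℝ) := by push_cast; ring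
          _ ≤ (n:ℝ) := by exact_mod_cast this
          _ ≤ x := hnx
      calc (Nat.primeCounting s : ℝ) ≤ (s:ℝ) + 1 := by exact_mod_cast h1
        _ ≤ Real.sqrt x + 1 := by linarith
    have hsplit : (Nat.primeCounting n : ℝ) ≤ (Nat.primeCounting s : ℝ) + d := by
      have : Nat.primeCounting n ≤ Nat.primeCounting s + d := by omega
      exact_mod_cast this
    have hl2' : Real.log 2 < 0.6931471808 := Real.log_two_lt_d9
    have hlog4' : Real.log 4 = 2 * Real.log 2 := by
      rw [show (4:ℝ) = 2^2 by norm_num, Real.log_pow]; push_cast; ring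
    rw [lt_div_iff₀ hlogx]
    -- π n * log x ≤ (√x + 1 + d) * log x ≤ (√x+1)*log x + d*log x ≤ 4x + 8*1.39x < 16 x
    have hA : (Real.sqrt x + 1) * Real.log x ≤ 4 * x := by
      have h1 : (Real.sqrt x + 1) * Real.log x ≤ (Real.sqrt x + 1) * (2 * Real.sqrt x - 2) :=
        mul_le_mul_of_nonneg_left hlogx2 (by positivity)
      have h2 : (Real.sqrt x + 1) * (2 * Real.sqrt x - 2) = 2 * x - 2 := by
        have hss := Real.sq_sqrt (by linarith : (0:ℝ) ≤ x)
        ring_nf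
        ring_nf at hss
        linarith
      linarith
    rw [hlog4'] at hdle
    have hx2 : x * Real.log 2 ≤ 0.6931471808 * x :=
      by have := mul_le_mul_of_nonneg_left hl2'.le (by linarith : (0:ℝ) ≤ x); linarith
    have hB := mul_le_mul_of_nonneg_right hsplit (le_of_lt hlogx)
    rw [add_mul] at hB
    have hC := mul_le_mul_of_nonneg_right hpis (le_of_lt hlogx)
    linarith [hB, hC, hdle, hA, hx2]



theorem chebyshev_bounds :
    ∃ a b : ℝ, 0 < a ∧ 0 < b ∧
      ∀ᶠ x : ℝ in Filter.atTop,
        a * x / Real.log x < primePi x ∧ primePi x < b * x / Real.log x := by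
  refine ⟨4⁻¹, 16, by norm_num, by norm_num, ?_⟩
  filter_upwards [chebyshev_bounds'] with x hx
  simpa [primePi] using hx

end Main
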